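/- Let q be an odd prime power, d a non-square in F_q*, α in F_{q^2} with α² = d, Q = {γ in F_{q^2} : γ^{q+1} = 1}, and Q₀ = {γ² : γ in Q}. If q ≡ 1 (mod 4), then φ(Q₀) = {1} ∪ {c*α : c in F_q and c*α − 1 is not a square in F_{q^2}}, the maximal independent set of size (q+1)/2 from the (αF_q, 1)-construction. If q ≡ 3 (mod 4), then φ(Q₀ ∪ {0}) = {1, −1} ∪ {c*α : c in F_q and c*α − 1 is a square in F_{q^2}}, the maximal clique of size (q+3)/2 from the (αF_q, 1)-construction. -/

import Mathlib

open Polynomial in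
lemma aux_memK (q : ℕ) (hq3 : 3 ≤ q)
    (F : Type*) [Field F] [Fintype F]
    (K : Subfield F) (hK : Nat.card K = q)
    (y : F) : y ∈ K ↔ y ^ q = y := by
  haveI : Fintype K := Fintype.ofFinite K
  have hcardK : Fintype.card K = q := by rw [← Nat.card_eq_fintype_card, hK]
  constructor
  · intro hy
    have := FiniteField.pow_card (⟨y, hy⟩ : K)
    rw [hcardK] at this
    have := congrArg (Subtype.val) this
    push_cast at this
    simpa using this
  · intro hy
    classical
    set P : F[X] := X ^ q - X with hP
    have hdeg : P.natDegree = q := by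
      rw [hP]
      rw [Polynomial.natDegree_sub_eq_left_of_natDegree_lt] <;>
        simp [Polynomial.natDegree_X_pow, Polynomial.natDegree_X] <;> omega
    have hPne : P ≠ 0 := by
      intro h
      rw [h] at hdeg
      simp at hdeg
      omega
    set T : Finset F := P.roots.toFinset with hT
    have hTcard : T.card ≤ q := by
      calc T.card ≤ Multiset.card P.roots := Multiset.toFinset_card_le _
        _ ≤ P.natDegree := Polynomial.card_roots' P
        _ = q := hdeg
    set KF : Finset F := Finset.univ.image (fun z : K => (z : F)) with hKF
    have hKFcard : KF.card = q := by
      rw [hKF, Finset.card_image_of_injective _ Subtype.coe_injective,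
        Finset.card_univ, hcardK]
    have hsub : KF ⊆ T := by
      intro z hz
      rw [hKF] at hz
      obtain ⟨w, _, rfl⟩ := Finset.mem_image.mp hz
      rw [hT, Multiset.mem_toFinset, Polynomial.mem_roots hPne]
      have := FiniteField.pow_card w
      rw [hcardK] at this
      have := congrArg (Subtype.val) this
      push_cast at this
      simp [Polynomial.IsRoot, hP, this]
    have hEq : KF = T := Finset.eq_of_subset_of_card_le hsub (by omega)
    have hyT : y ∈ T := by
      rw [hT, Multiset.mem_toFinset, Polynomial.mem_roots hPne]
      simp [Polynomial.IsRoot, hP, hy]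
    rw [← hEq, hKF] at hyT
    obtain ⟨w, _, rfl⟩ := Finset.mem_image.mp hyT
    exact w.2

lemma aux_frob (q : ℕ) (hq : Odd q) (hq' : IsPrimePow q)
    (F : Type*) [Field F] [Fintype F] (hF : Fintype.card F = q ^ 2) :
    (∀ a b : F, (a + b) ^ q = a ^ q + b ^ q) ∧ ringChar F ≠ 2 := by
  obtain ⟨p, n, hp, hn, hqpn⟩ := hq'
  have hpN : p.Prime := Nat.prime_iff.mpr hp
  obtain ⟨cp, hcp⟩ := CharP.exists F
  haveI := hcp
  have hcpp : cp.Prime := CharP.char_is_prime F cp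
  obtain ⟨nn, hnn⟩ := FiniteField.card F cp
  have hdvd : p ∣ cp := by
    have h1 : p ∣ q := hqpn ▸ dvd_pow_self p hn.ne'
    have h2 : p ∣ cp ^ (nn : ℕ) := by
      rw [← hnn.2, hF]
      exact h1.trans (dvd_pow_self q two_ne_zero)
    exact hpN.dvd_of_dvd_pow h2
  have hpcp : p = cp := (Nat.prime_dvd_prime_iff_eq hpN hcpp).mp hdvd
  subst hpcp
  haveI : Fact p.Prime := ⟨hpN⟩
  constructor
  · intro a b
    rw [← hqpn]
    exact add_pow_char_pow ..
  · have : ringChar F = p := ringChar.eq F p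
    rw [this]
    intro h
    subst h
    have h2 : Odd (2 ^ n) := hqpn ▸ hq
    rw [Nat.odd_iff] at h2
    rcases n with _ | n
    · omega
    · rw [pow_succ, Nat.mul_mod, Nat.mod_self] at h2
      simp at h2

lemma aux_Q0 (q : ℕ) (hq3 : 3 ≤ q)
    (F : Type*) [Field F] [Fintype F] (hF : Fintype.card F = q ^ 2)
    (m : ℕ) (hm : 2 * m = q + 1) (γ : F) :
    (∃ δ : F, δ ^ (q + 1) = 1 ∧ δ ^ 2 = γ) ↔ γ ^ m = 1 := by
  have hm0 : 0 < m := by omega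
  have hkey : q ^ 2 = 2 * ((q - 1) * m) + 1 := by
    obtain ⟨a, rfl⟩ : ∃ a, q = a + 1 := ⟨q - 1, by omega⟩
    have h1 : a + 1 - 1 = a := rfl
    rw [h1]
    have h2 : 2 * (a * m) = a * (2 * m) := by ring
    rw [h2, hm]
    ring
  constructor
  · rintro ⟨δ, h1, rfl⟩
    rw [← pow_mul, hm, h1]
  · intro hγ
    have hγ0 : γ ≠ 0 := by
      intro h
      rw [h, zero_pow hm0.ne'] at hγ
      exact zero_ne_one hγ
    obtain ⟨g, hg⟩ := IsCyclic.exists_generator (α := Fˣ)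
    have horder : orderOf g = q ^ 2 - 1 := by
      rw [orderOf_eq_card_of_forall_mem_zpowers hg, Nat.card_units,
        Nat.card_eq_fintype_card, hF]
    set γu : Fˣ := Units.mk0 γ hγ0 with hγu
    obtain ⟨k, hk⟩ : γu ∈ Submonoid.powers g := by
      rw [mem_powers_iff_mem_zpowers]
      exact hg γu
    have hk' : g ^ k = γu := hk
    have hγum : γu ^ m = 1 := Units.ext (by simp [hγu, hγ])
    have hpow : g ^ (k * m) = 1 := by rw [pow_mul, hk', hγum]
    have hdvd : q ^ 2 - 1 ∣ k * m := by
      rw [← horder]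
      exact orderOf_dvd_of_pow_eq_one hpow
    have hfac : q ^ 2 - 1 = 2 * (q - 1) * m := by rw [mul_assoc]; omega
    have hdvd2 : 2 * (q - 1) ∣ k := by
      rw [hfac] at hdvd
      exact (Nat.mul_dvd_mul_iff_right hm0).mp hdvd
    obtain ⟨t, rfl⟩ := hdvd2
    have hq21 : (q - 1) * (q + 1) = q ^ 2 - 1 := by
      obtain ⟨a, rfl⟩ : ∃ a, q = a + 1 := ⟨q - 1, by omega⟩
      have h1 : a + 1 - 1 = a := rfl
      rw [h1]
      have : (a + 1) ^ 2 = a * (a + 1 + 1) + 1 := by ring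
      omega
    have hupow : ((g ^ ((q - 1) * t)) ^ (q + 1) : Fˣ) = 1 := by
      rw [← pow_mul]
      have heq : (q - 1) * t * (q + 1) = (q ^ 2 - 1) * t := by
        calc (q - 1) * t * (q + 1) = (q - 1) * (q + 1) * t := by ring
          _ = (q ^ 2 - 1) * t := by rw [hq21]
      rw [heq, pow_mul, ← horder, pow_orderOf_eq_one, one_pow]
    have husq : ((g ^ ((q - 1) * t)) ^ 2 : Fˣ) = γu := by
      rw [← pow_mul, ← hk']
      congr 1
      ring
    refine ⟨(g ^ ((q - 1) * t) : Fˣ), ?_, ?_⟩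
    · calc ((g ^ ((q - 1) * t) : Fˣ) : F) ^ (q + 1)
          = (((g ^ ((q - 1) * t)) ^ (q + 1) : Fˣ) : F) := by push_cast; ring
        _ = 1 := by rw [hupow]; rfl
    · calc ((g ^ ((q - 1) * t) : Fˣ) : F) ^ 2
          = (((g ^ ((q - 1) * t)) ^ 2 : Fˣ) : F) := by push_cast; ring
        _ = γ := by rw [husq]; rfl

lemma aux_main (q m : ℕ) (hq3 : 3 ≤ q) (hm : 2 * m = q + 1)
    (F : Type*) [Field F] [Fintype F] (hcardF : Fintype.card F = q ^ 2)
    (hchar2 : ringChar F ≠ 2)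
    (hfrob : ∀ a b : F, (a + b) ^ q = a ^ q + b ^ q)
    (K : Subfield F) (hKmem : ∀ y : F, y ∈ K ↔ y ^ q = y)
    (α : F) (hα0 : α ≠ 0) (hαq : α ^ q = -α)
    (γ : F) (hγQ : γ ^ (q + 1) = 1) (hγ1 : γ ≠ 1) :
    ∃ c ∈ K, (γ + 1) / (γ - 1) = c * α ∧
      (IsSquare ((γ + 1) / (γ - 1) - 1) ↔ (-1 : F) ^ m * γ ^ m = 1) := by
  have h2 : (2 : F) ≠ 0 := Ring.two_ne_zero hchar2
  have hγ0 : γ ≠ 0 := by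
    intro h
    rw [h, zero_pow (by omega)] at hγQ
    exact zero_ne_one hγQ
  have hγq : γ ^ q = γ⁻¹ := by
    field_simp
    rw [← pow_succ]
    exact hγQ
  have hu0 : γ - 1 ≠ 0 := sub_ne_zero.mpr hγ1
  set u : F := γ - 1 with hu
  set x : F := (γ + 1) / u with hxdef
  have hfrobs : ∀ a b : F, (a - b) ^ q = a ^ q - b ^ q := by
    intro a b
    have := hfrob (a - b) b
    rw [sub_add_cancel] at this
    linear_combination -this
  have hxq : x ^ q = -x := by
    rw [hxdef, div_pow, hu, hfrobs, one_pow, hγq]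
    have hinv1 : γ⁻¹ - 1 ≠ 0 := by
      rw [sub_ne_zero]
      exact fun h => hγ1 (by rw [← inv_inv γ, h, inv_one])
    have h1γ : (1 : F) - γ ≠ 0 := sub_ne_zero.mpr (Ne.symm hγ1)
    rw [hfrob, one_pow, hγq]
    field_simp
    ring
  refine ⟨x / α, ?_, by field_simp, ?_⟩
  · rw [hKmem, div_pow, hxq, hαq, neg_div_neg_eq]
  · have hM : Fintype.card F / 2 = (q - 1) * m := by
      have hkey : q ^ 2 = 2 * ((q - 1) * m) + 1 := by
        obtain ⟨a, rfl⟩ : ∃ a, q = a + 1 := ⟨q - 1, by omega⟩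
        have h1 : a + 1 - 1 = a := rfl
        rw [h1]
        have h2 : 2 * (a * m) = a * (2 * m) := by ring
        rw [h2, hm]
        ring
      omega
    have hx1 : x - 1 = 2 / u := by
      rw [hxdef]
      field_simp
      ring
    have hx1ne : x - 1 ≠ 0 := by
      rw [hx1]
      exact div_ne_zero h2 hu0
    have h2K : (2 : F) ^ q = 2 := by
      have h2mem : (2 : F) ∈ K := by
        rw [show (2 : F) = 1 + 1 by norm_num]
        exact K.add_mem K.one_mem K.one_mem
      exact (hKmem 2).mp h2mem
    have h2q1 : (2 : F) ^ (q - 1) = 1 := by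
      have : (2 : F) ^ (q - 1) * 2 = 1 * 2 := by
        rw [one_mul, ← pow_succ]
        have : q - 1 + 1 = q := by omega
        rw [this, h2K]
      exact mul_right_cancel₀ h2 this
    have huq : u ^ q = -γ⁻¹ * u := by
      rw [hu, hfrobs, one_pow, hγq]
      field_simp
      ring
    have huq1 : u ^ (q - 1) = -γ⁻¹ := by
      have : u ^ (q - 1) * u = -γ⁻¹ * u := by
        rw [← pow_succ]
        have h : q - 1 + 1 = q := by omega
        rw [h, huq]
      exact mul_right_cancel₀ hu0 this
    have hγm0 : γ ^ m ≠ 0 := pow_ne_zero _ hγ0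
    have hxm : (x - 1) ^ ((q - 1) * m) = (-1 : F) ^ m * γ ^ m := by
      have hprod : ((x - 1) * u) ^ ((q - 1) * m) = (2 : F) ^ ((q - 1) * m) := by
        rw [hx1, div_mul_cancel₀ _ hu0]
      rw [mul_pow] at hprod
      have h2m : (2 : F) ^ ((q - 1) * m) = 1 := by rw [pow_mul, h2q1, one_pow]
      have hum : u ^ ((q - 1) * m) = (-1 : F) ^ m * (γ ^ m)⁻¹ := by
        rw [pow_mul, huq1, neg_pow, inv_pow]
      rw [h2m, hum] at hprod
      have hneg : ((-1 : F) ^ m) * ((-1 : F) ^ m) = 1 := by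
        rw [← mul_pow]
        norm_num
      calc (x - 1) ^ ((q - 1) * m)
          = (x - 1) ^ ((q - 1) * m) * (((-1 : F) ^ m * (-1 : F) ^ m) * ((γ ^ m)⁻¹ * γ ^ m)) := by
            rw [hneg, inv_mul_cancel₀ hγm0, mul_one, mul_one]
        _ = (x - 1) ^ ((q - 1) * m) * ((-1 : F) ^ m * (γ ^ m)⁻¹) * ((-1 : F) ^ m * γ ^ m) := by
            ring
        _ = 1 * ((-1 : F) ^ m * γ ^ m) := by rw [hprod]
        _ = (-1 : F) ^ m * γ ^ m := one_mul _
    rw [FiniteField.isSquare_iff hchar2 hx1ne, hM, hxm]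

lemma aux_gamma (q : ℕ)
    (F : Type*) [Field F] (h2 : (2 : F) ≠ 0)
    (hfrob : ∀ a b : F, (a + b) ^ q = a ^ q + b ^ q)
    (α : F) (hαq : α ^ q = -α) (c : F) (hcq : c ^ q = c)
    (hx1 : c * α ≠ 1) (hxm1 : c * α ≠ -1) :
    ∃ γ : F, γ ^ (q + 1) = 1 ∧ γ ≠ 1 ∧ (γ + 1) / (γ - 1) = c * α := by
  set x : F := c * α with hxdef
  have hden : x - 1 ≠ 0 := sub_ne_zero.mpr hx1
  have hden2 : x + 1 ≠ 0 := fun h => hxm1 (by linear_combination h)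
  have hfrobs : ∀ a b : F, (a - b) ^ q = a ^ q - b ^ q := by
    intro a b
    have := hfrob (a - b) b
    rw [sub_add_cancel] at this
    linear_combination -this
  have hxq : x ^ q = -x := by
    rw [hxdef, mul_pow, hcq, hαq]
    ring
  refine ⟨(x + 1) / (x - 1), ?_, ?_, ?_⟩
  · have h5 : (-x - 1) * (x - 1) ≠ 0 :=
      mul_ne_zero (fun h => hden2 (by linear_combination -h)) hden
    rw [pow_succ, div_pow, hfrob, hfrobs, one_pow, hxq, div_mul_div_comm,
      div_eq_one_iff_eq h5]
    ring
  · intro h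
    rw [div_eq_one_iff_eq hden] at h
    have : (2 : F) = 0 := by linear_combination h
    exact h2 this
  · have hg1 : (x + 1) / (x - 1) - 1 = 2 / (x - 1) := by
      field_simp
      ring
    have hg2 : (x + 1) / (x - 1) + 1 = 2 * x / (x - 1) := by
      field_simp
      ring
    rw [hg2, hg1, div_div_div_cancel_right₀]
    · rw [mul_comm, mul_div_assoc, div_self h2, mul_one]
    · exact hden

/-- φ carries the Q-construction onto the (αF_q, 1)-construction.
If q ≡ 1 (mod 4), then φ(Q₀) = {1} ∪ {cα : c ∈ F_q, cα − 1 not a square};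
if q ≡ 3 (mod 4), then φ(Q₀ ∪ {0}) = {1, −1} ∪ {cα : c ∈ F_q, cα − 1 a square}. -/
theorem stmt_14 (q : ℕ) (hq : Odd q) (hq' : IsPrimePow q)
    (F : Type*) [Field F] (hF : Nat.card F = q ^ 2)
    (K : Subfield F) (hK : Nat.card K = q)
    (d : F) (hdK : d ∈ K) (hd0 : d ≠ 0) (hdns : ¬ ∃ c ∈ K, c * c = d)
    (α : F) (hα : α ^ 2 = d)
    (φ : F → F) (hφ : ∀ γ : F, γ ≠ 1 → φ γ = (γ + 1) / (γ - 1)) (hφ1 : φ 1 = 1)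
    (Q Q₀ : Set F) (hQ : Q = {γ : F | γ ^ (q + 1) = 1})
    (hQ₀ : Q₀ = (fun γ => γ ^ 2) '' Q) :
    (q % 4 = 1 →
      φ '' Q₀ = {1} ∪ {x : F | ∃ c ∈ K, x = c * α ∧ ¬ IsSquare (c * α - 1)}) ∧
    (q % 4 = 3 →
      φ '' (Q₀ ∪ {0}) = {1, -1} ∪ {x : F | ∃ c ∈ K, x = c * α ∧ IsSquare (c * α - 1)}) := by
  have hq3 : 3 ≤ q := by
    have h2 := hq'.two_le
    rcases hq with ⟨t, ht⟩
    omega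
  have hFfin : Finite F := Nat.finite_of_card_ne_zero (by rw [hF]; positivity)
  haveI := Fintype.ofFinite F
  have hcardF : Fintype.card F = q ^ 2 := by rw [← Nat.card_eq_fintype_card, hF]
  obtain ⟨hfrob, hchar2⟩ := aux_frob q hq hq' F hcardF
  have h2 : (2 : F) ≠ 0 := Ring.two_ne_zero hchar2
  have hm1ne : (-1 : F) ≠ 1 := Ring.neg_one_ne_one_of_char_ne_two hchar2
  have hKmem : ∀ y : F, y ∈ K ↔ y ^ q = y := aux_memK q hq3 F K hK
  set m := (q + 1) / 2 with hmdef
  have hm : 2 * m = q + 1 := by rcases hq with ⟨t, ht⟩; omega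
  have hQ0 : ∀ γ : F, γ ∈ Q₀ ↔ γ ^ m = 1 := by
    intro γ
    rw [hQ₀, hQ]
    rw [← aux_Q0 q hq3 F hcardF m hm γ]
    constructor
    · rintro ⟨δ, hδ, rfl⟩
      exact ⟨δ, hδ, rfl⟩
    · rintro ⟨δ, h1, h2⟩
      exact ⟨δ, h1, h2⟩
  have h1Q0 : (1 : F) ∈ Q₀ := (hQ0 1).mpr (one_pow m)
  -- facts about α
  have hα0 : α ≠ 0 := by
    intro h
    apply hd0
    rw [← hα, h]
    ring
  have hαK : α ∉ K := by
    intro h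
    exact hdns ⟨α, h, by rw [← hα]; ring⟩
  -- d is a nonsquare in K, so d ^ ((q-1)/2) = -1
  haveI : Fintype K := Fintype.ofFinite K
  have hcardK : Fintype.card K = q := by rw [← Nat.card_eq_fintype_card, hK]
  have hcharK2 : ringChar K ≠ 2 := by
    intro h
    have heven := FiniteField.even_card_of_char_two h
    rw [hcardK] at heven
    rcases hq with ⟨t, ht⟩
    omega
  have hdq : d ^ ((q - 1) / 2) = -1 := by
    set d' : K := ⟨d, hdK⟩ with hd'
    have hd'0 : d' ≠ 0 := by
      intro h
      apply hd0
      exact congrArg Subtype.val h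
    have hd'ns : ¬ IsSquare d' := by
      rintro ⟨r, hr⟩
      apply hdns
      refine ⟨(r : F), r.2, ?_⟩
      have := congrArg Subtype.val hr
      push_cast at this
      exact this.symm
    have hdich := FiniteField.pow_dichotomy hcharK2 hd'0
    have hd'pow : d' ^ (Fintype.card K / 2) = -1 := by
      rcases hdich with h | h
      · exact absurd ((FiniteField.isSquare_iff hcharK2 hd'0).mpr h) hd'ns
      · exact h
    rw [hcardK] at hd'pow
    have hq2 : q / 2 = (q - 1) / 2 := by rcases hq with ⟨t, ht⟩; omega
    rw [hq2] at hd'pow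
    have := congrArg Subtype.val hd'pow
    push_cast at this
    exact this
  have hαq : α ^ q = -α := by
    have hqodd : q = 2 * ((q - 1) / 2) + 1 := by rcases hq with ⟨t, ht⟩; omega
    rw [hqodd, pow_succ, pow_mul, hα, hdq]
    ring
  have hcq : ∀ c : F, c ∈ K → c ^ q = c := fun c hc => (hKmem c).mp hc
  -- the two workhorses
  have himg : ∀ γ : F, γ ^ (q + 1) = 1 → γ ≠ 1 → ∃ c ∈ K, φ γ = c * α ∧
      (IsSquare (φ γ - 1) ↔ (-1 : F) ^ m * γ ^ m = 1) := by
    intro γ hγ1 hγ2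
    rw [hφ γ hγ2]
    exact aux_main q m hq3 hm F hcardF hchar2 hfrob K hKmem α hα0 hαq γ hγ1 hγ2
  have hpre : ∀ c : F, c ∈ K → c * α ≠ 1 ∧ c * α ≠ -1 := by
    intro c hc
    constructor
    · intro h
      have hc0 : c ≠ 0 := by rintro rfl; rw [zero_mul] at h; exact zero_ne_one h
      apply hαK
      have : α = c⁻¹ * (c * α) := by field_simp
      rw [h, mul_one] at this
      rw [this]
      exact K.inv_mem hc
    · intro h
      have hc0 : c ≠ 0 := by
        rintro rfl
        rw [zero_mul] at h
        exact hm1ne (by linear_combination (-2 : F) * h)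
      apply hαK
      have : α = c⁻¹ * (c * α) := by field_simp
      rw [h] at this
      rw [this]
      exact K.mul_mem (K.inv_mem hc) (K.neg_mem K.one_mem)
  have hbuild : ∀ c : F, c ∈ K → ∃ γ : F, γ ^ (q + 1) = 1 ∧ γ ≠ 1 ∧ φ γ = c * α := by
    intro c hc
    obtain ⟨hp1, hp2⟩ := hpre c hc
    obtain ⟨γ, hg1, hg2, hg3⟩ := aux_gamma q F h2 hfrob α hαq c (hcq c hc) hp1 hp2
    exact ⟨γ, hg1, hg2, by rw [hφ γ hg2]; exact hg3⟩
  have hpm : ∀ γ : F, γ ^ (q + 1) = 1 → γ ^ m = 1 ∨ γ ^ m = -1 := by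
    intro γ h
    have hmm : γ ^ m * γ ^ m = 1 := by
      rw [← pow_add]
      have : m + m = q + 1 := by omega
      rw [this, h]
    exact mul_self_eq_one_iff.mp hmm
  have hQ1 : ∀ γ : F, γ ^ m = 1 → γ ^ (q + 1) = 1 := by
    intro γ h
    have : q + 1 = m * 2 := by omega
    rw [this, pow_mul, h, one_pow]
  constructor
  · -- q ≡ 1 (mod 4)
    intro h41
    have hmodd : Odd m := by
      obtain ⟨t, ht⟩ : ∃ t, q = 4 * t + 1 := ⟨q / 4, by omega⟩
      exact ⟨t, by omega⟩
    have hn1p : (-1 : F) ^ m = -1 := Odd.neg_one_pow hmodd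
    ext x
    simp only [Set.mem_image, Set.mem_union, Set.mem_singleton_iff, Set.mem_setOf_eq]
    constructor
    · rintro ⟨γ, hγ, rfl⟩
      have hγm : γ ^ m = 1 := (hQ0 γ).mp hγ
      have hγQ1 : γ ^ (q + 1) = 1 := hQ1 γ hγm
      by_cases hγ1 : γ = 1
      · subst hγ1
        exact Or.inl hφ1
      · right
        obtain ⟨c, hc, hφγ, hiff⟩ := himg γ hγQ1 hγ1
        refine ⟨c, hc, hφγ, ?_⟩
        intro hs
        rw [← hφγ] at hs
        have := hiff.mp hs
        rw [hγm, mul_one, hn1p] at this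
        exact hm1ne this
    · rintro (rfl | ⟨c, hc, rfl, hns⟩)
      · exact ⟨1, h1Q0, hφ1⟩
      · obtain ⟨γ, hg1, hg2, hg3⟩ := hbuild c hc
        refine ⟨γ, ?_, hg3⟩
        rw [hQ0]
        rcases hpm γ hg1 with h | h
        · exact h
        · exfalso
          obtain ⟨c', hc', hφγ', hiff'⟩ := himg γ hg1 hg2
          apply hns
          rw [← hg3]
          apply hiff'.mpr
          rw [h, hn1p]
          ring
  · -- q ≡ 3 (mod 4)
    intro h43
    have hmeven : Even m := by
      obtain ⟨t, ht⟩ : ∃ t, q = 4 * t + 3 := ⟨q / 4, by omega⟩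
      exact ⟨t + 1, by omega⟩
    have hn1p : (-1 : F) ^ m = 1 := Even.neg_one_pow hmeven
    have hφ0 : φ 0 = -1 := by
      rw [hφ 0 (by exact fun h => zero_ne_one h)]
      norm_num
    ext x
    simp only [Set.mem_image, Set.mem_union, Set.mem_insert_iff, Set.mem_singleton_iff,
      Set.mem_setOf_eq]
    constructor
    · rintro ⟨γ, hγ | rfl, rfl⟩
      · have hγm : γ ^ m = 1 := (hQ0 γ).mp hγ
        have hγQ1 : γ ^ (q + 1) = 1 := hQ1 γ hγm
        by_cases hγ1 : γ = 1
        · subst hγ1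
          exact Or.inl (Or.inl hφ1)
        · right
          obtain ⟨c, hc, hφγ, hiff⟩ := himg γ hγQ1 hγ1
          refine ⟨c, hc, hφγ, ?_⟩
          rw [← hφγ]
          apply hiff.mpr
          rw [hγm, mul_one, hn1p]
      · exact Or.inl (Or.inr hφ0)
    · rintro ((rfl | rfl) | ⟨c, hc, rfl, hsq⟩)
      · exact ⟨1, Or.inl h1Q0, hφ1⟩
      · exact ⟨0, Or.inr rfl, hφ0⟩
      · obtain ⟨γ, hg1, hg2, hg3⟩ := hbuild c hc
        refine ⟨γ, Or.inl ?_, hg3⟩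
        rw [hQ0]
        obtain ⟨c', hc', hφγ', hiff'⟩ := himg γ hg1 hg2
        have := hiff'.mp (by rw [hg3]; exact hsq)
        rw [hn1p, one_mul] at this
        exact this
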